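/- In every finite extensive game with perfect information whose strategic form satisfies the TDI condition, all subgame perfect equilibria are payoff equivalent, i.e., any two subgame perfect equilibria s and t satisfy o(leaf(s)) = o(leaf(t)). -/

import Mathlib

/-- A finite extensive game with perfect information: a finite rooted tree whose
leaves carry an outcome for each player and whose internal nodes carry the player
to move and a nonempty finite family of children. -/
inductive ExtGame (ι : Type) : Type where
  | leaf : (ι → ℝ) → ExtGame ι
  | node : ι → (m : ℕ) → (Fin (m + 1) → ExtGame ι) → ExtGame ι

namespace ExtGame

variable {ι : Type}

/-- A strategy of player `i`: at every node where it is `i`'s turn, a choice of a child. -/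
def Strategy (i : ι) : ExtGame ι → Type
  | .leaf _ => PUnit
  | .node j m children => (i = j → Fin (m + 1)) × ∀ c : Fin (m + 1), Strategy i (children c)

/-- The outcome (payoff vector) when every player follows his strategy. -/
def outcome : (G : ExtGame ι) → (∀ i, G.Strategy i) → ι → ℝ
  | .leaf o, _ => o
  | .node j _ children, σ =>
      outcome (children ((σ j).1 rfl)) (fun i => (σ i).2 ((σ j).1 rfl))

/-- Nodes of the game tree, identified by the path from the root. -/
inductive Node : ExtGame ι → Type where
  | root (G : ExtGame ι) : Node G
  | child {j : ι} {m : ℕ} {children : Fin (m + 1) → ExtGame ι}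
      (c : Fin (m + 1)) : Node (children c) → Node (.node j m children)

/-- The subgame rooted at a node. -/
def subgameAt : {G : ExtGame ι} → Node G → ExtGame ι
  | _, .root G => G
  | _, .child c v => subgameAt v

/-- The joint strategy of the subgame rooted at `v` induced by a joint strategy. -/
def restrictProfile : {G : ExtGame ι} → (∀ i, G.Strategy i) → (v : Node G) →
    ∀ i, (subgameAt v).Strategy i
  | _, σ, .root _ => σ
  | _, σ, .child c v => restrictProfile (fun i => (σ i).2 c) v

/-- Nash equilibrium of (the strategic form of) an extensive game. -/
def NashEq [DecidableEq ι] (G : ExtGame ι) (σ : ∀ i, G.Strategy i) : Prop :=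
  ∀ (i : ι) (t : G.Strategy i), G.outcome σ i ≥ G.outcome (Function.update σ i t) i

/-- Subgame perfect equilibrium: the induced joint strategy is a Nash equilibrium
in the subgame rooted at every node. -/
def SPE [DecidableEq ι] (G : ExtGame ι) (σ : ∀ i, G.Strategy i) : Prop :=
  ∀ v : Node G, (subgameAt v).NashEq (restrictProfile σ v)

/-- At the root (if it is a non-leaf), the player to move chooses a child whose
subgame outcome (under the induced strategies) is maximal for him. -/
def BestAtRoot : (G : ExtGame ι) → (∀ i, G.Strategy i) → Prop
  | .leaf _, _ => True
  | .node j _ children, σ =>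
      ∀ c, outcome (children ((σ j).1 rfl)) (fun i => (σ i).2 ((σ j).1 rfl)) j ≥
        outcome (children c) (fun i => (σ i).2 c) j

/-- The list of payoff vectors at the leaves of the game tree (one entry per leaf). -/
def leavesList : ExtGame ι → List (ι → ℝ)
  | .leaf o => [o]
  | .node _ _ children => (List.ofFn fun c => leavesList (children c)).flatten

/-- The game is without relevant ties: at every non-leaf node `u` with `turn(u) = i`,
the outcome function of player `i` is injective on the leaves of the subtree rooted at `u`. -/
def NoRelevantTies : ExtGame ι → Prop
  | .leaf _ => True
  | .node j m children =>
      ((ExtGame.node j m children).leavesList.Pairwise fun o o' => o j ≠ o' j) ∧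
      ∀ c, NoRelevantTies (children c)

/-- The player to move at a node (`none` if the node is a leaf). -/
def turnAt {G : ExtGame ι} (v : Node G) : Option ι :=
  match subgameAt v with
  | .leaf _ => none
  | .node j _ _ => some j

end ExtGame


/-- The strategic form of `G` satisfies the transference of decisionmaker indifference (TDI)
condition: whenever two strategies of a player `i` yield him the same payoff against some
joint strategy of the other players, they yield the same payoff to all players. -/
def TDI {n : ℕ} (G : ExtGame (Fin n)) : Prop :=
  ∀ (i : Fin n) (r t : G.Strategy i) (σ : ∀ j, G.Strategy j),
    G.outcome (Function.update σ i r) i = G.outcome (Function.update σ i t) i →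
    ∀ j : Fin n, G.outcome (Function.update σ i r) j = G.outcome (Function.update σ i t) j


namespace ExtGame

/-- A default strategy (always choose child 0). -/
def defaultStrategy {ι : Type} (i : ι) : (G : ExtGame ι) → G.Strategy i
  | .leaf _ => ⟨⟩
  | .node _ _ ch => ⟨fun _ => 0, fun c => defaultStrategy i (ch c)⟩

/-- Lift a strategy of a child subgame to the whole game: always move towards child `c`. -/
def liftStrat {ι : Type} {j : ι} {m : ℕ} {children : Fin (m+1) → ExtGame ι}
    [DecidableEq (Fin (m+1))]
    (c : Fin (m+1)) (i : ι) (s : (children c).Strategy i) :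
    (ExtGame.node j m children).Strategy i :=
  ⟨fun _ => c, Function.update (fun c' => defaultStrategy i (children c')) c s⟩

lemma outcome_node_eq {ι : Type} {j : ι} {m : ℕ} {children : Fin (m+1) → ExtGame ι}
    (π : ∀ i, (ExtGame.node j m children).Strategy i) {c : Fin (m+1)}
    (hc : (π j).1 rfl = c) :
    (ExtGame.node j m children).outcome π
      = (children c).outcome (fun k => (π k).2 c) := by
  subst hc; rfl

end ExtGame

lemma tdi_child {n : ℕ} {j : Fin n} {m : ℕ} {children : Fin (m+1) → ExtGame (Fin n)}
    (h : TDI (.node j m children)) (c : Fin (m+1)) : TDI (children c) := by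
  intro i r t σ' hi
  have key : ∀ s : (children c).Strategy i,
      (ExtGame.node j m children).outcome
        (Function.update (fun k => ExtGame.liftStrat c k (σ' k)) i (ExtGame.liftStrat c i s)) =
      (children c).outcome (Function.update σ' i s) := by
    intro s
    have hc : ((Function.update (fun k => ExtGame.liftStrat c k (σ' k)) i
        (ExtGame.liftStrat c i s)) j).1 rfl = c := by
      rcases eq_or_ne j i with rfl | hne
      · rw [Function.update_self]; rfl
      · rw [Function.update_of_ne hne]; rfl
    rw [ExtGame.outcome_node_eq _ hc]
    have hp : (fun k => ((Function.update (fun k => ExtGame.liftStrat (j := j) c k (σ' k)) i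
        (ExtGame.liftStrat (j := j) c i s)) k).2 c) = Function.update σ' i s := by
      funext k
      rcases eq_or_ne k i with rfl | hne
      · rw [Function.update_self, Function.update_self]; simp [ExtGame.liftStrat]
      · rw [Function.update_of_ne hne, Function.update_of_ne hne]; simp [ExtGame.liftStrat]
    rw [hp]
  have main := h i (ExtGame.liftStrat c i r) (ExtGame.liftStrat c i t)
    (fun k => ExtGame.liftStrat c k (σ' k)) (by rw [key r, key t]; exact hi)
  intro j'
  have h2 := main j'
  rwa [key r, key t] at h2

/-- Deviating at the root to move to child `d` (keeping behavior below). -/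
lemma dev_outcome {n : ℕ} {j : Fin n} {m : ℕ} {children : Fin (m+1) → ExtGame (Fin n)}
    (π : ∀ i, (ExtGame.node j m children).Strategy i) (d : Fin (m+1)) :
    (ExtGame.node j m children).outcome
        (Function.update π j ⟨fun _ => d, (π j).2⟩)
      = (children d).outcome (fun i => (π i).2 d) := by
  have hc : ((Function.update π j (⟨fun _ => d, (π j).2⟩ :
      (ExtGame.node j m children).Strategy j)) j).1 rfl = d := by
    erw [Function.update_self]
  rw [ExtGame.outcome_node_eq _ hc]
  have hp : (fun k => ((Function.update π j (⟨fun _ => d, (π j).2⟩ :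
      (ExtGame.node j m children).Strategy j)) k).2 d) = fun i => (π i).2 d := by
    funext k
    rcases eq_or_ne k j with rfl | hne
    · erw [Function.update_self]
    · erw [Function.update_of_ne hne]
  rw [hp]

lemma spe_payoff_aux {n : ℕ} :
    ∀ G : ExtGame (Fin n), TDI G →
      ∀ σ τ : ∀ i, G.Strategy i, G.SPE σ → G.SPE τ →
        ∀ j : Fin n, G.outcome σ j = G.outcome τ j := by
  intro G
  induction G with
  | leaf o => intro _ σ τ _ _ j'; rfl
  | node j m children ih =>
    intro h σ τ hσ hτ j'
    have hσc : ∀ c, (children c).SPE (fun i => (σ i).2 c) := fun c v => hσ (.child c v)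
    have hτc : ∀ c, (children c).SPE (fun i => (τ i).2 c) := fun c v => hτ (.child c v)
    have IH : ∀ c j', (children c).outcome (fun i => (σ i).2 c) j'
        = (children c).outcome (fun i => (τ i).2 c) j' :=
      fun c => ih c (tdi_child h c) _ _ (hσc c) (hτc c)
    -- notation for the two root choices
    set a := (σ j).1 rfl with ha
    set b := (τ j).1 rfl with hb
    have eσ : (ExtGame.node j m children).outcome σ
        = (children a).outcome (fun i => (σ i).2 a) := ExtGame.outcome_node_eq σ rfl
    have eτ : (ExtGame.node j m children).outcome τ
        = (children b).outcome (fun i => (τ i).2 b) := ExtGame.outcome_node_eq τ rfl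
    have n1 : (ExtGame.node j m children).outcome σ j
        ≥ (children b).outcome (fun i => (σ i).2 b) j := by
      have this1 : (ExtGame.node j m children).outcome σ j
          ≥ (ExtGame.node j m children).outcome
              (Function.update σ j ⟨fun _ => b, (σ j).2⟩) j :=
        hσ (ExtGame.Node.root _) j ⟨fun _ => b, (σ j).2⟩
      rwa [dev_outcome σ b] at this1
    have n2 : (ExtGame.node j m children).outcome τ j
        ≥ (children a).outcome (fun i => (τ i).2 a) j := by
      have this1 : (ExtGame.node j m children).outcome τ j
          ≥ (ExtGame.node j m children).outcome
              (Function.update τ j ⟨fun _ => a, (τ j).2⟩) j :=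
        hτ (ExtGame.Node.root _) j ⟨fun _ => a, (τ j).2⟩
      rwa [dev_outcome τ a] at this1
    have hj : (ExtGame.node j m children).outcome σ j
        = (ExtGame.node j m children).outcome τ j := by
      apply le_antisymm
      · calc (ExtGame.node j m children).outcome σ j
            = (children a).outcome (fun i => (σ i).2 a) j := by rw [eσ]
          _ = (children a).outcome (fun i => (τ i).2 a) j := IH a j
          _ ≤ (ExtGame.node j m children).outcome τ j := n2
      · calc (ExtGame.node j m children).outcome τ j
            = (children b).outcome (fun i => (τ i).2 b) j := by rw [eτ]
          _ = (children b).outcome (fun i => (σ i).2 b) j := (IH b j).symm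
          _ ≤ (ExtGame.node j m children).outcome σ j := n1
    have hEq : (ExtGame.node j m children).outcome (Function.update σ j (σ j)) j
        = (ExtGame.node j m children).outcome
            (Function.update σ j ⟨fun _ => b, (σ j).2⟩) j := by
      rw [Function.update_eq_self, dev_outcome σ b, hj, eτ]
      exact (IH b j).symm
    have final := h j (σ j) ⟨fun _ => b, (σ j).2⟩ σ hEq j'
    rw [Function.update_eq_self, dev_outcome σ b] at final
    rw [final, IH b j', eτ]

/-- In every finite extensive game with perfect information whose strategic form satisfies
the TDI condition, all subgame perfect equilibria are payoff equivalent. -/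
theorem spe_payoff_equivalent_of_TDI {n : ℕ} (G : ExtGame (Fin n)) (h : TDI G) :
    ∀ σ τ : ∀ i, G.Strategy i, G.SPE σ → G.SPE τ →
      ∀ j : Fin n, G.outcome σ j = G.outcome τ j :=
  spe_payoff_aux G h
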